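/- arXiv:2410.16149 — 2 statements merged into one kernel-verified Lean document; each statement's English description precedes it below -/
import Mathlib

section
/- (Proposition 1) Let x_n, x_m ∈ A_{d+1} and v_n, v_m, f, ℓ ∈ ℝ. Then the following are equivalent: (i) x_n, x_m ∈ H_d, v_n = ‖x_n‖₂², v_m = ‖x_m‖₂², ℓ = η(x_n, x_m), and f = ⟨x_n, x_m⟩; (ii) the matrix Q(x_n, x_m, v_n, v_m, f, ℓ) is positive semi-definite and has rank d+1. -/
open Finset Matrix

/-- The Minkowski bilinear form on `ℝ^{d+1}`. -/
noncomputable def minkowski {d : ℕ} (x y : Fin (d+1) → ℝ) : ℝ :=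
  (∑ i : Fin d, x i.castSucc * y i.castSucc) - x (Fin.last d) * y (Fin.last d)

/-- The hyperbolic space `H_d`. -/
def hyperSheet (d : ℕ) : Set (Fin (d+1) → ℝ) :=
  {x | minkowski x x = -1 ∧ 0 < x (Fin.last d)}

/-- `ξ̃ = (ξ_1, …, ξ_d, −ξ_{d+1})`. -/
def tilde {d : ℕ} (x : Fin (d+1) → ℝ) : Fin (d+1) → ℝ :=
  fun i => if i = Fin.last d then -x i else x i

/-- The symmetric `(d+5)×(d+5)` block matrix
`Q = [I_{d+1}, x_n, x̃_n, x_m, x̃_m; x_nᵀ, v_n, −1, f, ℓ; x̃_nᵀ, −1, v_n, ℓ, f;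
x_mᵀ, f, ℓ, v_m, −1; x̃_mᵀ, ℓ, f, −1, v_m]`. -/
noncomputable def Qmat {d : ℕ} (xn xm : Fin (d+1) → ℝ) (vn vm f l : ℝ) :
    Matrix (Fin (d+1+4)) (Fin (d+1+4)) ℝ :=
  Matrix.reindex finSumFinEquiv finSumFinEquiv
    (Matrix.fromBlocks 1 (Matrix.of fun i j => ![xn, tilde xn, xm, tilde xm] j i)
      (Matrix.of fun i j => ![xn, tilde xn, xm, tilde xm] i j)
      !![vn, -1, f, l; -1, vn, l, f; f, l, vm, -1; l, f, -1, vm])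


section Aux

variable {m n : Type*} [Fintype m] [Fintype n] [DecidableEq m] [DecidableEq n]

omit [DecidableEq n] in
lemma aux_ker_eq (B : Matrix m n ℝ) (C : Matrix n n ℝ) (u : (m ⊕ n) → ℝ)
    (hu : (Matrix.fromBlocks (1 : Matrix m m ℝ) B Bᵀ C) *ᵥ u = 0) :
    (u ∘ Sum.inl) = -(B *ᵥ (u ∘ Sum.inr)) ∧
      Bᵀ *ᵥ (u ∘ Sum.inl) + C *ᵥ (u ∘ Sum.inr) = 0 := by
  have h : (Matrix.fromBlocks (1 : Matrix m m ℝ) B Bᵀ C) *ᵥ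
      Sum.elim (u ∘ Sum.inl) (u ∘ Sum.inr) = 0 := by
    rw [Sum.elim_comp_inl_inr]; exact hu
  rw [Matrix.fromBlocks_mulVec, Matrix.one_mulVec] at h
  constructor
  · funext i
    have := congrFun h (Sum.inl i)
    simpa [eq_neg_iff_add_eq_zero] using this
  · funext j
    exact congrFun h (Sum.inr j)

lemma aux_block_iff (B : Matrix m n ℝ) (C : Matrix n n ℝ) :
    ((Matrix.fromBlocks (1 : Matrix m m ℝ) B Bᵀ C).PosSemidef ∧
      (Matrix.fromBlocks (1 : Matrix m m ℝ) B Bᵀ C).rank = Fintype.card m) ↔ C = Bᵀ * B := by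
  constructor
  · rintro ⟨-, hrank⟩
    set Q := Matrix.fromBlocks (1 : Matrix m m ℝ) B Bᵀ C with hQdef
    have hnull : Module.finrank ℝ (LinearMap.ker Q.mulVecLin) = Fintype.card n := by
      have h := LinearMap.finrank_range_add_finrank_ker Q.mulVecLin
      rw [Module.finrank_pi ℝ] at h
      have h2 : Q.rank = Module.finrank ℝ (LinearMap.range Q.mulVecLin) := rfl
      rw [← h2, hrank, Fintype.card_sum] at h
      omega
    set ψ : (LinearMap.ker Q.mulVecLin) →ₗ[ℝ] (n → ℝ) :=
      (LinearMap.funLeft ℝ ℝ Sum.inr).comp (LinearMap.ker Q.mulVecLin).subtype with hψdef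
    have hψinj : Function.Injective ψ := by
      intro u v huv
      have hu := (aux_ker_eq B C u.1 u.2).1
      have hv := (aux_ker_eq B C v.1 v.2).1
      have hr : (u.1 ∘ Sum.inr) = (v.1 ∘ Sum.inr) := huv
      apply Subtype.ext
      funext x
      cases x with
      | inl i => rw [← Function.comp_apply (f := u.1), ← Function.comp_apply (f := v.1),
          hu, hv, hr]
      | inr j => exact congrFun hr j
    have hrange : LinearMap.range ψ = ⊤ := by
      apply Submodule.eq_top_of_finrank_eq
      rw [LinearMap.finrank_range_of_inj hψinj, hnull, Module.finrank_pi ℝ]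
    have key : ∀ b : n → ℝ, C *ᵥ b = (Bᵀ * B) *ᵥ b := by
      intro b
      obtain ⟨u, hu⟩ := LinearMap.range_eq_top.mp hrange b
      have h1 := (aux_ker_eq B C u.1 u.2).1
      have h2 := (aux_ker_eq B C u.1 u.2).2
      have hb : (u.1 ∘ Sum.inr) = b := hu
      rw [hb] at h1 h2
      rw [h1, Matrix.mulVec_neg, neg_add_eq_zero] at h2
      rw [← h2, Matrix.mulVec_mulVec]
    ext i j
    have := congrFun (key (Pi.single j 1)) i
    simpa [Matrix.mulVec_single_one] using this
  · rintro rfl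
    have hA : Matrix.fromBlocks (1 : Matrix m m ℝ) B Bᵀ (Bᵀ * B) =
        (Matrix.fromCols (1 : Matrix m m ℝ) B)ᴴ * (Matrix.fromCols 1 B) := by
      rw [Matrix.conjTranspose_eq_transpose_of_trivial, Matrix.transpose_fromCols,
        Matrix.transpose_one, Matrix.fromRows_mul_fromCols, Matrix.one_mul, Matrix.one_mul,
        Matrix.mul_one]
    rw [hA]
    refine ⟨Matrix.posSemidef_conjTranspose_mul_self _, ?_⟩
    rw [Matrix.rank_conjTranspose_mul_self]
    refine le_antisymm (Matrix.rank_le_card_height _) ?_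
    have h := Matrix.rank_mul_le_left (Matrix.fromCols (1 : Matrix m m ℝ) B)
      (Matrix.fromRows (1 : Matrix m m ℝ) 0)
    rw [Matrix.fromCols_mul_fromRows, Matrix.mul_one, Matrix.mul_zero, add_zero,
      Matrix.rank_one] at h
    exact h

end Aux

lemma tilde_castSucc {d : ℕ} (x : Fin (d+1) → ℝ) (i : Fin d) :
    tilde x i.castSucc = x i.castSucc := by
  simp [tilde, (Fin.castSucc_lt_last i).ne]

lemma tilde_last {d : ℕ} (x : Fin (d+1) → ℝ) : tilde x (Fin.last d) = -x (Fin.last d) := by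
  simp [tilde]

lemma sum_mul_tilde {d : ℕ} (x y : Fin (d+1) → ℝ) :
    ∑ i, x i * tilde y i = minkowski x y := by
  rw [Fin.sum_univ_castSucc, minkowski, tilde_last]
  simp only [tilde_castSucc]
  ring

lemma sum_tilde_mul {d : ℕ} (x y : Fin (d+1) → ℝ) :
    ∑ i, tilde x i * y i = minkowski x y := by
  rw [Fin.sum_univ_castSucc, minkowski, tilde_last]
  simp only [tilde_castSucc]
  ring

lemma sum_tilde_mul_tilde {d : ℕ} (x y : Fin (d+1) → ℝ) :
    ∑ i, tilde x i * tilde y i = ∑ i, x i * y i := by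
  rw [Fin.sum_univ_castSucc, Fin.sum_univ_castSucc (f := fun i => x i * y i), tilde_last,
    tilde_last]
  simp only [tilde_castSucc]
  ring

lemma minkowski_tilde_left {d : ℕ} (x y : Fin (d+1) → ℝ) :
    minkowski (tilde x) y = ∑ i, x i * y i := by
  rw [minkowski, Fin.sum_univ_castSucc (f := fun i => x i * y i), tilde_last]
  simp only [tilde_castSucc]
  ring

lemma minkowski_tilde_right {d : ℕ} (x y : Fin (d+1) → ℝ) :
    minkowski x (tilde y) = ∑ i, x i * y i := by
  rw [minkowski, Fin.sum_univ_castSucc (f := fun i => x i * y i), tilde_last]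
  simp only [tilde_castSucc]
  ring

lemma minkowski_comm {d : ℕ} (x y : Fin (d+1) → ℝ) : minkowski x y = minkowski y x := by
  have h : ∑ i : Fin d, x i.castSucc * y i.castSucc = ∑ i : Fin d, y i.castSucc * x i.castSucc :=
    Finset.sum_congr rfl fun i _ => mul_comm _ _
  unfold minkowski
  rw [h]; ring

/-- Proposition 1: for `x_n, x_m ∈ A_{d+1}`, one has `x_n, x_m ∈ H_d`,
`v_n = ‖x_n‖₂²`, `v_m = ‖x_m‖₂²`, `ℓ = η(x_n,x_m)` and `f = ⟨x_n,x_m⟩`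
if and only if `Q ⪰ 0` and `rank Q = d+1`. -/
theorem hyperbolic_matrix_characterization (d : ℕ) (xn xm : Fin (d+1) → ℝ)
    (hxn : 1 ≤ xn (Fin.last d)) (hxm : 1 ≤ xm (Fin.last d)) (vn vm f l : ℝ) :
    (xn ∈ hyperSheet d ∧ xm ∈ hyperSheet d ∧
      vn = ∑ i, xn i ^ 2 ∧ vm = ∑ i, xm i ^ 2 ∧
      l = minkowski xn xm ∧ f = ∑ i, xn i * xm i) ↔
    ((Qmat xn xm vn vm f l).PosSemidef ∧ (Qmat xn xm vn vm f l).rank = d + 1) := by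
  set B : Matrix (Fin (d+1)) (Fin 4) ℝ :=
    Matrix.of fun i j => ![xn, tilde xn, xm, tilde xm] j i with hB
  have hBT : (Matrix.of fun i j => ![xn, tilde xn, xm, tilde xm] i j) = Bᵀ := by
    ext i j; rfl
  have hQ : ∀ C : Matrix (Fin 4) (Fin 4) ℝ, Qmat xn xm vn vm f l =
      Matrix.reindex finSumFinEquiv finSumFinEquiv (Matrix.fromBlocks 1 B Bᵀ
        !![vn, -1, f, l; -1, vn, l, f; f, l, vm, -1; l, f, -1, vm]) := by
    intro _; rw [Qmat, hBT]
  have hPSD : (Qmat xn xm vn vm f l).PosSemidef ↔ (Matrix.fromBlocks 1 B Bᵀ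
      !![vn, -1, f, l; -1, vn, l, f; f, l, vm, -1; l, f, -1, vm]).PosSemidef := by
    rw [hQ 1, Matrix.reindex_apply]
    exact Matrix.posSemidef_submatrix_equiv finSumFinEquiv.symm
  have hRank : (Qmat xn xm vn vm f l).rank = (Matrix.fromBlocks 1 B Bᵀ
      !![vn, -1, f, l; -1, vn, l, f; f, l, vm, -1; l, f, -1, vm]).rank := by
    rw [hQ 1]; exact Matrix.rank_reindex _ _ _
  have hiff := aux_block_iff B !![vn, -1, f, l; -1, vn, l, f; f, l, vm, -1; l, f, -1, vm]
  rw [Fintype.card_fin] at hiff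
  rw [hPSD, hRank, hiff]
  have hmul : ∀ a b, (Bᵀ * B) a b = ∑ i, B i a * B i b := by
    intro a b; simp [Matrix.mul_apply]
  constructor
  · rintro ⟨⟨hn1, -⟩, ⟨hm1, -⟩, hvn, hvm, hl, hf⟩
    subst hvn hvm hl hf
    ext a b
    rw [hmul]
    fin_cases a <;> fin_cases b <;>
      simp [hB, sum_mul_tilde, sum_tilde_mul, sum_tilde_mul_tilde, minkowski_tilde_left, minkowski_tilde_right, hn1, hm1] <;>
      first
        | exact Finset.sum_congr rfl fun i _ => pow_two _
        | exact Finset.sum_congr rfl fun i _ => (pow_two _).symm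
        | exact minkowski_comm _ _
        | exact Finset.sum_congr rfl fun i _ => mul_comm _ _
  · intro h
    have entry : ∀ a b : Fin 4,
        (!![vn, -1, f, l; -1, vn, l, f; f, l, vm, -1; l, f, -1, vm] : Matrix _ _ ℝ) a b
          = ∑ i, B i a * B i b := by
      intro a b; rw [congrFun (congrFun h a) b, hmul]
    have h00 := entry 0 0
    have h01 := entry 0 1
    have h02 := entry 0 2
    have h03 := entry 0 3
    have h22 := entry 2 2
    have h23 := entry 2 3
    simp [hB, sum_mul_tilde, sum_tilde_mul, sum_tilde_mul_tilde, minkowski_tilde_left, minkowski_tilde_right]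
      at h00 h01 h02 h03 h22 h23
    refine ⟨⟨h01.symm, lt_of_lt_of_le one_pos hxn⟩, ⟨h23.symm, lt_of_lt_of_le one_pos hxm⟩,
      ?_, ?_, h03, ?_⟩
    · rw [h00]; exact Finset.sum_congr rfl fun i _ => (pow_two (xn i)).symm
    · rw [h22]; exact Finset.sum_congr rfl fun i _ => (pow_two (xm i)).symm
    · exact h02
end

section
/- (Proposition 2) Let x ∈ A_{d+1} and v ∈ ℝ. Then x ∈ H_d and v = ‖x‖₂² if and only if the matrix V(x, v) is positive semi-definite and has rank d+1. -/
open Finset Matrix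

/-- The symmetric `(d+3)×(d+3)` block matrix
`V = [I_{d+1}, x, x̃; xᵀ, v, −1; x̃ᵀ, −1, v]`. -/
noncomputable def Vmat {d : ℕ} (x : Fin (d+1) → ℝ) (v : ℝ) :
    Matrix (Fin (d+1+2)) (Fin (d+1+2)) ℝ :=
  Matrix.reindex finSumFinEquiv finSumFinEquiv
    (Matrix.fromBlocks 1 (Matrix.of fun i j => ![x, tilde x] j i)
      (Matrix.of fun i j => ![x, tilde x] i j)
      !![v, -1; -1, v])

namespace HypAux
variable {d : ℕ}

def Bmat (x : Fin (d+1) → ℝ) : Matrix (Fin (d+1)) (Fin 2) ℝ :=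
  Matrix.of fun i j => ![x, tilde x] j i

def Mmat (x : Fin (d+1) → ℝ) (v : ℝ) :
    Matrix (Fin (d+1) ⊕ Fin 2) (Fin (d+1) ⊕ Fin 2) ℝ :=
  Matrix.fromBlocks 1 (Bmat x) (Bmat x)ᴴ !![v, -1; -1, v]

lemma Vmat_eq (x : Fin (d+1) → ℝ) (v : ℝ) :
    Vmat x v = Matrix.reindex finSumFinEquiv finSumFinEquiv (Mmat x v) := by
  unfold Vmat Mmat
  refine congrArg _ ?_
  ext (i | i) (j | j) <;> simp [Bmat, conjTranspose_apply]

lemma tilde_sq (x : Fin (d+1) → ℝ) (i : Fin (d+1)) : tilde x i * tilde x i = x i * x i := by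
  unfold tilde; split <;> ring

lemma sum_mul_tilde (x : Fin (d+1) → ℝ) :
    ∑ i, x i * tilde x i = minkowski x x := by
  rw [Fin.sum_univ_castSucc]
  have h1 : ∀ i : Fin d, tilde x i.castSucc = x i.castSucc := fun i => by
    simp [tilde, (Fin.castSucc_lt_last i).ne]
  have h2 : tilde x (Fin.last d) = -x (Fin.last d) := by simp [tilde]
  simp only [h1, h2, minkowski]
  ring

lemma BtB (x : Fin (d+1) → ℝ) :
    (Bmat x)ᴴ * Bmat x =
      !![∑ i, x i ^ 2, minkowski x x; minkowski x x, ∑ i, x i ^ 2] := by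
  have hsq : ∑ i, x i ^ 2 = ∑ i, x i * x i := by
    refine Finset.sum_congr rfl fun i _ => sq (x i) ▸ by ring
  ext i j
  fin_cases i <;> fin_cases j <;>
    simp [Bmat, mul_apply, conjTranspose_apply, hsq, ← sum_mul_tilde x, tilde_sq,
      mul_comm]

def Lmat (x : Fin (d+1) → ℝ) : Matrix (Fin (d+1)) (Fin (d+1) ⊕ Fin 2) ℝ :=
  fromCols 1 (Bmat x)

lemma LconjmulL (x : Fin (d+1) → ℝ) :
    (Lmat x)ᴴ * Lmat x = fromBlocks 1 (Bmat x) (Bmat x)ᴴ ((Bmat x)ᴴ * Bmat x) := by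
  rw [Lmat, conjTranspose_fromCols_eq_fromRows_conjTranspose, fromRows_mul_fromCols]
  simp

lemma rank_L (x : Fin (d+1) → ℝ) : (Lmat x).rank = d + 1 := by
  refine le_antisymm ?_ ?_
  · simpa using Matrix.rank_le_card_height (Lmat x)
  · have h : Lmat x * (fromRows 1 0 : Matrix (Fin (d+1) ⊕ Fin 2) (Fin (d+1)) ℝ) = 1 := by
      rw [Lmat, fromCols_mul_fromRows]; simp
    have h2 := Matrix.rank_mul_le_left (Lmat x) (fromRows 1 0 : Matrix (Fin (d+1) ⊕ Fin 2) (Fin (d+1)) ℝ)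
    rw [h] at h2
    simpa using h2

lemma schur_zero_of_rank (x : Fin (d+1) → ℝ) (v : ℝ)
    (hrank : (Mmat x v).rank = d + 1) :
    !![v, -1; -1, v] - (Bmat x)ᴴ * Bmat x = 0 := by
  set B := Bmat x with hB
  set S : Matrix (Fin 2) (Fin 2) ℝ := !![v, -1; -1, v] - Bᴴ * B with hS
  set M := Mmat x v with hM
  -- kernel of M has dimension 2
  have hker : Module.finrank ℝ (LinearMap.ker M.mulVecLin) = 2 := by
    have h1 := LinearMap.finrank_range_add_finrank_ker M.mulVecLin
    rw [Module.finrank_fintype_fun_eq_card] at h1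
    have h2 : Fintype.card (Fin (d+1) ⊕ Fin 2) = d + 3 := by simp
    have h3 : Module.finrank ℝ (LinearMap.range M.mulVecLin) = d + 1 := hrank
    omega
  -- every kernel element of M gives a kernel element of S
  have hstruct : ∀ u ∈ LinearMap.ker M.mulVecLin,
      (u ∘ Sum.inl) = -(B *ᵥ (u ∘ Sum.inr)) ∧ S *ᵥ (u ∘ Sum.inr) = 0 := by
    intro u hu
    rw [LinearMap.mem_ker, mulVecLin_apply, hM, Mmat, fromBlocks_mulVec] at hu
    have ha : (1 : Matrix (Fin (d+1)) (Fin (d+1)) ℝ) *ᵥ (u ∘ Sum.inl) + B *ᵥ (u ∘ Sum.inr) = 0 := by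
      ext i; exact congrFun hu (Sum.inl i)
    have hb : Bᴴ *ᵥ (u ∘ Sum.inl) + !![v, -1; -1, v] *ᵥ (u ∘ Sum.inr) = 0 := by
      ext i; exact congrFun hu (Sum.inr i)
    rw [one_mulVec] at ha
    have hy : (u ∘ Sum.inl) = -(B *ᵥ (u ∘ Sum.inr)) := by
      rw [eq_neg_iff_add_eq_zero]; exact ha
    refine ⟨hy, ?_⟩
    rw [hS, sub_mulVec, ← mulVec_mulVec, ← neg_neg (B *ᵥ (u ∘ Sum.inr)), ← hy, mulVec_neg,
      sub_neg_eq_add, add_comm]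
    exact hb
  -- injective map from ker M to ker S
  let g : LinearMap.ker M.mulVecLin →ₗ[ℝ] LinearMap.ker S.mulVecLin :=
    LinearMap.codRestrict _ ((LinearMap.funLeft ℝ ℝ Sum.inr).comp (Submodule.subtype _))
      (fun u => by
        rw [LinearMap.mem_ker, mulVecLin_apply]
        exact (hstruct u u.2).2)
  have hginj : Function.Injective g := by
    intro a b hab
    have h2 : (a : (Fin (d+1) ⊕ Fin 2) → ℝ) ∘ Sum.inr = (b : (Fin (d+1) ⊕ Fin 2) → ℝ) ∘ Sum.inr :=
      congrArg Subtype.val hab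
    have h1 : (a : (Fin (d+1) ⊕ Fin 2) → ℝ) ∘ Sum.inl = (b : (Fin (d+1) ⊕ Fin 2) → ℝ) ∘ Sum.inl := by
      rw [(hstruct a a.2).1, (hstruct b b.2).1, h2]
    ext (i | i)
    · exact congrFun h1 i
    · exact congrFun h2 i
  have hle : 2 ≤ Module.finrank ℝ (LinearMap.ker S.mulVecLin) := by
    have := LinearMap.finrank_le_finrank_of_injective hginj
    omega
  have htop : LinearMap.ker S.mulVecLin = ⊤ := by
    apply Submodule.eq_top_of_finrank_eq
    have hle2 : Module.finrank ℝ (LinearMap.ker S.mulVecLin) ≤ Module.finrank ℝ (Fin 2 → ℝ) :=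
      Submodule.finrank_le _
    rw [Module.finrank_fintype_fun_eq_card] at hle2 ⊢
    simp only [Fintype.card_fin] at hle2 ⊢
    omega
  -- S = 0
  ext i j
  have hz : S *ᵥ Pi.single j 1 = 0 := by
    have hmem : (Pi.single j 1 : Fin 2 → ℝ) ∈ LinearMap.ker S.mulVecLin := by
      rw [htop]; trivial
    rw [LinearMap.mem_ker, mulVecLin_apply] at hmem
    exact hmem
  have := congrFun hz i
  rw [mulVec_single] at this
  simpa using this

end HypAux

open HypAux

/-- Proposition 2: for `x ∈ A_{d+1}`, one has `x ∈ H_d` and `v = ‖x‖₂²`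
if and only if `V(x,v) ⪰ 0` and `rank V(x,v) = d+1`. -/


theorem hyperbolic_small_matrix_characterization (d : ℕ) (x : Fin (d+1) → ℝ)
    (hx : 1 ≤ x (Fin.last d)) (v : ℝ) :
    (x ∈ hyperSheet d ∧ v = ∑ i, x i ^ 2) ↔
    ((Vmat x v).PosSemidef ∧ (Vmat x v).rank = d + 1) := by

  constructor
  · rintro ⟨⟨hmin, _⟩, hv⟩
    have hC : !![v, -1; -1, v] = (Bmat x)ᴴ * Bmat x := by
      rw [BtB, hmin, hv]
    have hM : Mmat x v = (Lmat x)ᴴ * Lmat x := by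
      rw [LconjmulL, Mmat, hC]
    constructor
    · rw [Vmat_eq, reindex_apply]
      exact (posSemidef_submatrix_equiv _).mpr
        (hM ▸ posSemidef_conjTranspose_mul_self (Lmat x))
    · rw [Vmat_eq, rank_reindex, hM, rank_conjTranspose_mul_self, rank_L]
  · rintro ⟨_, hrank⟩
    rw [Vmat_eq, rank_reindex] at hrank
    have hS := schur_zero_of_rank x v hrank
    have hC : !![v, -1; -1, v] = (Bmat x)ᴴ * Bmat x := sub_eq_zero.mp hS
    rw [BtB] at hC
    have h00 : v = ∑ i, x i ^ 2 := by
      have := congrFun (congrFun hC 0) 0; simpa using this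
    have h01 : (-1 : ℝ) = minkowski x x := by
      have := congrFun (congrFun hC 0) 1; simpa using this
    exact ⟨⟨h01.symm, lt_of_lt_of_le one_pos hx⟩, h00⟩
end
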